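/- For every t ∈ ℝ, the limit as s → 0 (s ≠ 0) of K^B_{12}(γ(t), γ(t+s)) equals 1/(4π), where for x ≠ γ(s′) one defines K^B_{12}(x, γ(s′)) = (1/(4π))·[(r·τ(s′))² − (r·n(s′))²]/‖r‖² with r = x − γ(s′); K^B_{12} equals −G^B_{n_y n_y} + G^B_{τ_y τ_y}, i.e. the difference of the second directional derivatives of y ↦ G^B(x,y) twice in direction τ(s′) and twice in direction n(s′) (the logarithmic terms cancel). -/

import Mathlib

open Real Filter Topology MeasureTheory

noncomputable section

/-- Euclidean dot product on `ℝ × ℝ`. -/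
def dot2 (v w : ℝ × ℝ) : ℝ := v.1 * w.1 + v.2 * w.2

/-- Unit tangent vector `τ(s) = γ′(s)`. -/
def tang (γ : ℝ → ℝ × ℝ) (s : ℝ) : ℝ × ℝ := deriv γ s

/-- Unit normal vector `n(s) = (τ₂(s), −τ₁(s))`. -/
def nor (γ : ℝ → ℝ × ℝ) (s : ℝ) : ℝ × ℝ := ((deriv γ s).2, -(deriv γ s).1)

/-- Signed curvature `κ(s) = −γ″(s)·n(s)`. -/
def curv (γ : ℝ → ℝ × ℝ) (s : ℝ) : ℝ := -(dot2 (deriv (deriv γ) s) (nor γ s))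

/-- Explicit formula for `K^B_{12}(x, γ(s')) = −G^B_{n_y n_y} + G^B_{τ_y τ_y}`,
with `r = x − γ(s')`. -/
def K12B (γ : ℝ → ℝ × ℝ) (x : ℝ × ℝ) (s' : ℝ) : ℝ :=
  1 / (4 * π) * ((dot2 (x - γ s') (tang γ s')) ^ 2 - (dot2 (x - γ s') (nor γ s')) ^ 2)
    / dot2 (x - γ s') (x - γ s')

lemma dot2_smul (c : ℝ) (u w : ℝ × ℝ) : dot2 (c • u) w = c * dot2 u w := by
  simp [dot2]; ring

lemma dot2_smul_right (c : ℝ) (u w : ℝ × ℝ) : dot2 u (c • w) = c * dot2 u w := by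
  simp [dot2]; ring

lemma dot2_cont : Continuous (fun p : (ℝ × ℝ) × (ℝ × ℝ) => dot2 p.1 p.2) := by
  unfold dot2; fun_prop

theorem stmt2 (L : ℝ) (hL : 0 < L) (γ : ℝ → ℝ × ℝ)
    (hγ : ContDiff ℝ (⊤ : ℕ∞) γ)
    (hper : ∀ s, γ (s + L) = γ s)
    (hinj : Set.InjOn γ (Set.Ico 0 L))
    (harc : ∀ s, dot2 (deriv γ s) (deriv γ s) = 1)
    (t : ℝ) :
    Tendsto (fun s : ℝ => K12B γ (γ t) (t + s)) (𝓝[≠] (0 : ℝ))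
      (𝓝 (1 / (4 * π))) := by
  have hd : Differentiable ℝ γ := hγ.differentiable (by simp)
  have hdc : Continuous (deriv γ) := hγ.continuous_deriv (mod_cast le_top)
  set v := deriv γ t with hv
  -- map s ↦ t + s
  have hmap : Tendsto (fun s : ℝ => t + s) (𝓝[≠] (0:ℝ)) (𝓝[≠] t) := by
    apply tendsto_nhdsWithin_of_tendsto_nhds_of_eventually_within
    · have : Tendsto (fun s : ℝ => t + s) (𝓝 0) (𝓝 (t + 0)) :=
        (continuous_const.add continuous_id).tendsto 0
      simpa using this.mono_left nhdsWithin_le_nhds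
    · filter_upwards [self_mem_nhdsWithin] with s hs
      simp only [Set.mem_compl_iff, Set.mem_singleton_iff] at hs ⊢
      intro h
      apply hs
      linarith [h]
  have hslope0 : Tendsto (slope γ t) (𝓝[≠] t) (𝓝 v) :=
    hasDerivAt_iff_tendsto_slope.mp (hd t).hasDerivAt
  set w : ℝ → ℝ × ℝ := fun s => s⁻¹ • (γ (t + s) - γ t) with hwdef
  have hw : Tendsto w (𝓝[≠] (0:ℝ)) (𝓝 v) := by
    have h := hslope0.comp hmap
    refine h.congr (fun s => ?_)
    simp [Function.comp, slope, hwdef, vsub_eq_sub, add_sub_cancel_left]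
  have hτ : Tendsto (fun s : ℝ => tang γ (t + s)) (𝓝[≠] (0:ℝ)) (𝓝 v) := by
    have : Tendsto (fun s : ℝ => deriv γ (t + s)) (𝓝 0) (𝓝 (deriv γ (t + 0))) :=
      (hdc.comp (continuous_const.add continuous_id)).tendsto 0
    simpa [tang] using this.mono_left nhdsWithin_le_nhds
  have hn : Tendsto (fun s : ℝ => nor γ (t + s)) (𝓝[≠] (0:ℝ)) (𝓝 (v.2, -v.1)) := by
    have hc : Continuous (fun s : ℝ => nor γ (t + s)) := by
      unfold nor
      fun_prop
    have : Tendsto (fun s : ℝ => nor γ (t + s)) (𝓝 0) (𝓝 (nor γ (t + 0))) := hc.tendsto 0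
    simpa [nor] using this.mono_left nhdsWithin_le_nhds
  -- limits of the three scalar quantities
  have hA : Tendsto (fun s => dot2 (w s) (tang γ (t + s))) (𝓝[≠] (0:ℝ)) (𝓝 1) := by
    have := (dot2_cont.tendsto (v, v)).comp (hw.prodMk_nhds hτ)
    simpa [Function.comp_def, harc t, hv] using this
  have hB : Tendsto (fun s => dot2 (w s) (nor γ (t + s))) (𝓝[≠] (0:ℝ)) (𝓝 0) := by
    have := (dot2_cont.tendsto (v, (v.2, -v.1))).comp (hw.prodMk_nhds hn)
    have h0 : dot2 v (v.2, -v.1) = 0 := by simp [dot2]; ring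
    simpa [Function.comp_def, h0] using this
  have hC : Tendsto (fun s => dot2 (w s) (w s)) (𝓝[≠] (0:ℝ)) (𝓝 1) := by
    have := (dot2_cont.tendsto (v, v)).comp (hw.prodMk_nhds hw)
    simpa [Function.comp_def, harc t, hv] using this
  -- combined limit
  have hg : Tendsto (fun s => 1 / (4 * π) *
      ((dot2 (w s) (tang γ (t + s))) ^ 2 - (dot2 (w s) (nor γ (t + s))) ^ 2) /
      dot2 (w s) (w s)) (𝓝[≠] (0:ℝ)) (𝓝 (1 / (4 * π))) := by
    have hnum : Tendsto (fun s => 1 / (4 * π) *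
        ((dot2 (w s) (tang γ (t + s))) ^ 2 - (dot2 (w s) (nor γ (t + s))) ^ 2))
        (𝓝[≠] (0:ℝ)) (𝓝 (1 / (4 * π))) := by
      have := ((hA.pow 2).sub (hB.pow 2)).const_mul (1 / (4 * π))
      simpa using this
    have := hnum.div hC one_ne_zero
    simpa [Pi.div_def] using this
  refine hg.congr' ?_
  filter_upwards [self_mem_nhdsWithin] with s hs
  have hs0 : s ≠ 0 := hs
  have hr : γ t - γ (t + s) = (-s) • w s := by
    simp [hwdef, smul_smul, hs0]
  simp only [K12B, hr, dot2_smul, dot2_smul_right]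
  set a := dot2 (w s) (tang γ (t + s))
  set b := dot2 (w s) (nor γ (t + s))
  set c := dot2 (w s) (w s)
  rw [show (-s * a) ^ 2 - (-s * b) ^ 2 = s ^ 2 * (a ^ 2 - b ^ 2) by ring,
    show -s * (-s * c) = s ^ 2 * c by ring,
    show 1 / (4 * π) * (s ^ 2 * (a ^ 2 - b ^ 2)) = s ^ 2 * (1 / (4 * π) * (a ^ 2 - b ^ 2)) by ring,
    mul_div_mul_left _ _ (pow_ne_zero 2 hs0)]
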